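/- Let G be a group and let U, V, M be subgroups of G such that M normalizes both U and V, the multiplication map U × V × M → G, (u, v, m) ↦ u·v·m, is injective, and every element of G that commutes with every element of M belongs to M. Let K be a subgroup of G such that K = (K∩U)·(K∩V)·(K∩M). If s ∈ G normalizes M and s ∈ M·U·K, then s ∈ M. -/
import Mathlib


/-- Let `G` be a group with subgroups `U`, `V`, `M` such that `M` normalizes `U` and
`V`, the multiplication map `U × V × M → G` is injective, and every element of `G`
commuting with all of `M` lies in `M`.  Let `K` be a subgroup with
`K = (K∩U)·(K∩V)·(K∩M)`.  If `s ∈ G` normalizes `M` and `s ∈ M·U·K`, then `s ∈ M`. -/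
theorem mem_levi_of_normalizes_and_mem_MUK
    {G : Type*} [Group G] (U V M : Subgroup G)
    (hUM : ∀ m ∈ M, ∀ u ∈ U, m * u * m⁻¹ ∈ U)
    (hVM : ∀ m ∈ M, ∀ v ∈ V, m * v * m⁻¹ ∈ V)
    (hinj : Function.Injective
      (fun p : U × V × M => ((p.1 : G) * (p.2.1 : G) * (p.2.2 : G))))
    (hcent : ∀ g : G, (∀ m ∈ M, g * m = m * g) → g ∈ M)
    (K : Subgroup G)
    (hK : ∀ k ∈ K, ∃ u ∈ U ⊓ K, ∃ v ∈ V ⊓ K, ∃ m ∈ M ⊓ K, k = u * v * m)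
    (s : G) (hsM : ∀ g : G, g ∈ M ↔ s * g * s⁻¹ ∈ M)
    (hs : ∃ m ∈ M, ∃ u ∈ U, ∃ k ∈ K, s = m * u * k) :
    s ∈ M := by
  obtain ⟨m, hm, u, hu, k, hk, rfl⟩ := hs
  obtain ⟨u', hu', v', hv', m'', hm'', rfl⟩ := hK k hk
  set w : G := u * u' with hw_def
  have hw : w ∈ U := U.mul_mem hu hu'.1
  have hv : v' ∈ V := hv'.1
  have hm2 : m'' ∈ M := hm''.1
  -- key commutation claim
  have key : ∀ m₂ ∈ M, m₂ * w = w * m₂ ∧ m₂ * v' = v' * m₂ := by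
    intro m₂ hm₂
    set s : G := m * u * (u' * v' * m'') with hs_def
    have hm₀ : m''⁻¹ * m₂ * m'' ∈ M := M.mul_mem (M.mul_mem (M.inv_mem hm2) hm₂) hm2
    have hm₁ : s * (m''⁻¹ * m₂ * m'') * s⁻¹ ∈ M := (hsM _).1 hm₀
    set m₁ : G := s * (m''⁻¹ * m₂ * m'') * s⁻¹ with hm₁_def
    set m₃ : G := m⁻¹ * m₁ * m with hm₃_def
    have hm₃ : m₃ ∈ M := M.mul_mem (M.mul_mem (M.inv_mem hm) hm₁) hm
    have heq : w * v' * (m'' * (m''⁻¹ * m₂ * m'')) =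
        (m₃ * w * m₃⁻¹) * (m₃ * v' * m₃⁻¹) * (m₃ * m'') := by
      have : s * (m''⁻¹ * m₂ * m'') = m₁ * s := by
        rw [hm₁_def]; group
      rw [hs_def] at this
      -- this : m * u * (u' * v' * m'') * (...) = m₁ * (m * u * (u' * v' * m''))
      have h2 : w * v' * (m'' * (m''⁻¹ * m₂ * m'')) = m₃ * (w * v' * m'') := by
        rw [hm₃_def]
        have := this
        calc w * v' * (m'' * (m''⁻¹ * m₂ * m''))
            = m⁻¹ * (m * u * (u' * v' * m'') * (m''⁻¹ * m₂ * m'')) := by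
              rw [hw_def]; group
          _ = m⁻¹ * (m₁ * (m * u * (u' * v' * m''))) := by rw [this]
          _ = m⁻¹ * m₁ * m * (w * v' * m'') := by rw [hw_def]; group
      rw [h2]; group
    have := hinj (a₁ := (⟨w, hw⟩, ⟨v', hv⟩, ⟨m'' * (m''⁻¹ * m₂ * m''), M.mul_mem hm2 hm₀⟩))
      (a₂ := (⟨m₃ * w * m₃⁻¹, hUM _ hm₃ _ hw⟩, ⟨m₃ * v' * m₃⁻¹, hVM _ hm₃ _ hv⟩,
        ⟨m₃ * m'', M.mul_mem hm₃ hm2⟩))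
      (by simpa using heq)
    rw [Prod.ext_iff, Prod.ext_iff] at this
    obtain ⟨h1, h2, h3⟩ := this
    have e1 : w = m₃ * w * m₃⁻¹ := congrArg Subtype.val h1
    have e2 : v' = m₃ * v' * m₃⁻¹ := congrArg Subtype.val h2
    have e3 : m'' * (m''⁻¹ * m₂ * m'') = m₃ * m'' := congrArg Subtype.val h3
    have hm₃₂ : m₃ = m₂ := by
      have : m₂ * m'' = m₃ * m'' := by rw [← e3]; group
      exact (mul_right_cancel this).symm
    rw [hm₃₂] at e1 e2
    constructor
    · calc m₂ * w = (m₂ * w * m₂⁻¹) * m₂ := by group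
        _ = w * m₂ := by rw [← e1]
    · calc m₂ * v' = (m₂ * v' * m₂⁻¹) * m₂ := by group
        _ = v' * m₂ := by rw [← e2]
  have hwv : w * v' ∈ M := by
    refine hcent _ fun m₂ hm₂ => ?_
    obtain ⟨c1, c2⟩ := key m₂ hm₂
    calc w * v' * m₂ = w * (v' * m₂) := by group
      _ = w * (m₂ * v') := by rw [c2]
      _ = (w * m₂) * v' := by group
      _ = (m₂ * w) * v' := by rw [c1]
      _ = m₂ * (w * v') := by group
  have : m * u * (u' * v' * m'') = m * (w * v') * m'' := by rw [hw_def]; group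
  rw [this]
  exact M.mul_mem (M.mul_mem hm hwv) hm2
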